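/- Let s be a finite multiset of nonnegative real numbers, let a be an element of s and b an element of s with one copy of a removed, and let s' be the multiset obtained from s by removing one copy of a and one copy of b and adding one copy of a + b. Then for every k ≥ 0, the sum of the k largest elements of the multiset {x² : x ∈ s'} (all of them if s' has fewer than k elements) is greater than or equal to the sum of the k largest elements of the multiset {x² : x ∈ s}. In other words, coalescing two parts of a configuration never decreases any partial sum S²(x)_k of the squares of the parts sorted in decreasing order. -/

import Mathlib

open List

private lemma takeSum_mono' (l : List ℝ) (h : ∀ y ∈ l, 0 ≤ y) (k : ℕ) :
    (l.take k).sum ≤ (l.take (k+1)).sum := by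
  induction l generalizing k with
  | nil => simp
  | cons a l ih =>
    cases k with
    | zero => simpa using h a mem_cons_self
    | succ k =>
      simp only [take_succ_cons, sum_cons]
      exact add_le_add_right (ih (fun y hy => h y (mem_cons_of_mem _ hy)) k) a

private lemma takeSum_succ_le (l : List ℝ) (x : ℝ) (hx : 0 ≤ x)
    (h : ∀ y ∈ l, y ≤ x) (k : ℕ) :
    (l.take (k+1)).sum ≤ (l.take k).sum + x := by
  induction l generalizing k with
  | nil => simpa using hx
  | cons a l ih =>
    cases k with
    | zero => simpa using h a mem_cons_self
    | succ k =>
      simp only [take_succ_cons, sum_cons]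
      have := ih (fun y hy => h y (mem_cons_of_mem _ hy)) k
      linarith

private lemma takeSum_orderedInsert (l : List ℝ) (hl : l.Pairwise (· ≥ ·))
    (x : ℝ) (hx : 0 ≤ x) (k : ℕ) :
    ((l.orderedInsert (· ≥ ·) x).take (k+1)).sum
      = max (x + (l.take k).sum) ((l.take (k+1)).sum) := by
  induction l generalizing k with
  | nil => simp [orderedInsert, max_eq_left, hx]
  | cons a l ih =>
    rw [orderedInsert]
    by_cases hxa : x ≥ a
    · simp only [if_pos hxa, take_succ_cons, sum_cons]
      rw [max_eq_left]
      have hall : ∀ y ∈ a :: l, y ≤ x := by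
        intro y hy
        rcases mem_cons.1 hy with rfl | hy
        · exact hxa
        · exact le_trans ((pairwise_cons.1 hl).1 y hy) hxa
      have := takeSum_succ_le (a :: l) x hx hall k
      simp only [take_succ_cons, sum_cons] at this
      linarith
    · simp only [if_neg hxa]
      cases k with
      | zero =>
        simp only [take_succ_cons, take_zero, sum_cons, sum_nil, add_zero]
        rw [max_eq_right (le_of_lt (lt_of_not_ge hxa))]
      | succ k =>
        simp only [take_succ_cons, sum_cons]
        rw [ih (pairwise_cons.1 hl).2 k, ← max_add_add_left]
        ring_nf

private noncomputable def T (m : Multiset ℝ) (k : ℕ) : ℝ := ((m.sort (· ≤ ·)).reverse.take k).sum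

private lemma sortRev_sorted (m : Multiset ℝ) :
    (m.sort (· ≤ ·)).reverse.Pairwise (· ≥ ·) := by
  have h := m.pairwise_sort (· ≤ ·)
  exact List.pairwise_reverse.2 (h.imp fun hab => hab)

private lemma sortRev_cons (x : ℝ) (m : Multiset ℝ) :
    ((x ::ₘ m).sort (· ≤ ·)).reverse
      = ((m.sort (· ≤ ·)).reverse).orderedInsert (· ≥ ·) x := by
  have h1 : ((((x ::ₘ m).sort (· ≤ ·)).reverse : List ℝ) : Multiset ℝ) = x ::ₘ m := by
    rw [Multiset.coe_reverse, Multiset.sort_eq]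
  have h2 : ((((m.sort (· ≤ ·)).reverse).orderedInsert (· ≥ ·) x : List ℝ) : Multiset ℝ)
      = x ::ₘ m := by
    rw [Multiset.coe_eq_coe.2 (List.perm_orderedInsert (· ≥ ·) x ((m.sort (· ≤ ·)).reverse)),
      ← Multiset.cons_coe, Multiset.coe_reverse, Multiset.sort_eq]
  exact List.Perm.eq_of_pairwise'
    (sortRev_sorted _) ((sortRev_sorted m).orderedInsert x _) (Multiset.coe_eq_coe.1 (h1.trans h2.symm))

private lemma T_zero (m : Multiset ℝ) : T m 0 = 0 := by simp [T]

private lemma T_cons (x : ℝ) (hx : 0 ≤ x) (m : Multiset ℝ) (k : ℕ) :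
    T (x ::ₘ m) (k+1) = max (x + T m k) (T m (k+1)) := by
  rw [T, sortRev_cons, takeSum_orderedInsert _ (sortRev_sorted m) x hx k]; rfl

private lemma T_mono (m : Multiset ℝ) (hm : ∀ y ∈ m, 0 ≤ y) (k : ℕ) :
    T m k ≤ T m (k+1) :=
  takeSum_mono' _ (fun y hy => hm y (by
    rw [List.mem_reverse] at hy; exact (Multiset.mem_sort _).1 hy)) k

private lemma key (u v w : ℝ) (hu : 0 ≤ u) (hv : 0 ≤ v) (huw : u ≤ w) (hvw : v ≤ w)
    (huvw : u + v ≤ w) (t : Multiset ℝ) (ht : ∀ y ∈ t, 0 ≤ y) (k : ℕ) :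
    T (u ::ₘ v ::ₘ t) k ≤ T (w ::ₘ t) k := by
  have hw : 0 ≤ w := hu.trans huw
  match k with
  | 0 => simp [T_zero]
  | 1 =>
    rw [T_cons u hu _ 0, T_cons v hv _ 0, T_cons w hw _ 0, T_zero, T_zero]
    simp only [add_zero]
    exact max_le (le_max_of_le_left huw)
      (max_le (le_max_of_le_left hvw) (le_max_right _ _))
  | (j+2) =>
    rw [T_cons u hu _ (j+1), T_cons v hv _ j, T_cons v hv _ (j+1),
      T_cons w hw _ (j+1)]
    have hmono := T_mono t ht j
    refine max_le ?_ (max_le (le_max_of_le_left (by linarith)) (le_max_right _ _))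
    refine le_max_of_le_left ?_
    have : max (v + T t j) (T t (j+1)) ≤ (w - u) + T t (j+1) :=
      max_le (by linarith) (by linarith)
    linarith

/-- Coalescing two parts of a configuration of nonnegative masses never
decreases any partial sum of the squares of the parts sorted in decreasing order.
Here the sum of the `k` largest elements of a multiset `m` of reals is the sum of the
first `k` entries of `m` sorted in decreasing order (obtained by reversing the
increasing sort). -/
theorem stmt7 (s : Multiset ℝ) (hs : ∀ x ∈ s, 0 ≤ x)
    (a : ℝ) (ha : a ∈ s) (b : ℝ) (hb : b ∈ s.erase a)
    (s' : Multiset ℝ) (hs' : s' = (a + b) ::ₘ ((s.erase a).erase b)) :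
    ∀ k : ℕ,
      ((((s.map fun x => x ^ 2).sort (· ≤ ·)).reverse.take k).sum
        ≤ (((s'.map fun x => x ^ 2).sort (· ≤ ·)).reverse.take k).sum) := by
  intro k
  have ha0 : 0 ≤ a := hs a ha
  have hb0 : 0 ≤ b := hs b (Multiset.mem_of_mem_erase hb)
  have hsdecomp : s = a ::ₘ b ::ₘ (s.erase a).erase b := by
    rw [Multiset.cons_erase hb, Multiset.cons_erase ha]
  have hmap : s.map (fun x => x ^ 2)
      = a ^ 2 ::ₘ b ^ 2 ::ₘ ((s.erase a).erase b).map (fun x => x ^ 2) := by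
    conv_lhs => rw [hsdecomp]
    simp [Multiset.map_cons]
  have hmap' : s'.map (fun x => x ^ 2)
      = (a + b) ^ 2 ::ₘ ((s.erase a).erase b).map (fun x => x ^ 2) := by
    rw [hs']; simp [Multiset.map_cons]
  show T (s.map fun x => x ^ 2) k ≤ T (s'.map fun x => x ^ 2) k
  rw [hmap, hmap']
  refine key _ _ _ (sq_nonneg a) (sq_nonneg b) (by nlinarith) (by nlinarith)
    (by nlinarith) _ ?_ k
  intro y hy
  obtain ⟨z, _, rfl⟩ := Multiset.mem_map.1 hy
  exact sq_nonneg z
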